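/- Let R be a Dedekind domain, let R₀ = {x ∈ R : x is not a unit}, let D₀ = {I : I a proper ideal of R}, and fix an integer i ≥ 2. Then R₀^i = {x ∈ R : (x) ∈ D₀^i} if and only if R is a principal ideal domain. -/

import Mathlib

open Pointwise

section Helpers

open UniqueFactorizationMonoid

variable {R : Type*} [CommRing R] [IsDedekindDomain R]

/-- `x ↦ (x)` as a monoid hom from `R` to ideals of `R`. -/
def spanMonoidHom : R →* Ideal R where
  toFun x := Ideal.span {x}
  map_one' := by simp
  map_mul' x y := (Ideal.span_singleton_mul_span_singleton x y).symm

lemma span_singleton_ne_zero {c : R} (h0 : c ≠ 0) : (Ideal.span {c} : Ideal R) ≠ 0 := by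
  intro hz
  rw [Ideal.zero_eq_bot] at hz
  exact h0 (Ideal.span_singleton_eq_bot.mp hz)

lemma eq_top_of_card_eq_zero {I : Ideal R} (h0 : I ≠ 0)
    (h : Multiset.card (normalizedFactors I) = 0) : I = ⊤ := by
  have hassoc := prod_normalizedFactors h0
  rw [Multiset.card_eq_zero] at h
  rw [h, Multiset.prod_zero] at hassoc
  rw [← Ideal.one_eq_top]
  exact (associated_iff_eq.mp hassoc).symm

lemma prime_of_card_eq_one {I : Ideal R} (h0 : I ≠ 0)
    (h : Multiset.card (normalizedFactors I) = 1) : Prime I := by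
  obtain ⟨Q, hQ⟩ := Multiset.card_eq_one.mp h
  have hassoc := prod_normalizedFactors h0
  rw [hQ, Multiset.prod_singleton] at hassoc
  have hIQ : I = Q := (associated_iff_eq.mp hassoc).symm
  rw [hIQ]
  exact prime_of_normalized_factor Q (hQ ▸ Multiset.mem_singleton_self Q)

lemma card_of_prime {Q : Ideal R} (h : Prime Q) :
    Multiset.card (normalizedFactors Q) = 1 := by
  rw [normalizedFactors_irreducible h.irreducible, Multiset.card_singleton]

lemma one_le_card_of_nonunit {c : R} (h0 : c ≠ 0) (hnu : ¬ IsUnit c) :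
    1 ≤ Multiset.card (normalizedFactors (Ideal.span {c} : Ideal R)) := by
  rcases Nat.eq_zero_or_pos (Multiset.card (normalizedFactors (Ideal.span {c} : Ideal R)))
    with hc | hc
  · exact absurd (Ideal.span_singleton_eq_top.mp (eq_top_of_card_eq_zero
      (span_singleton_ne_zero h0) hc)) hnu
  · exact hc

lemma mem_pow_of_card_le :
    ∀ k : ℕ, 1 ≤ k → ∀ I : Ideal R, I ≠ 0 → k ≤ Multiset.card (normalizedFactors I) →
      I ∈ ({J : Ideal R | J ≠ ⊤} : Set (Ideal R)) ^ k := by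
  intro k
  induction k with
  | zero => omega
  | succ k ih =>
    intro _ I h0 hcard
    have hItop : I ≠ ⊤ := by
      intro ht
      rw [ht, ← Ideal.one_eq_top, normalizedFactors_one] at hcard
      simp at hcard
    rcases Nat.eq_zero_or_pos k with rfl | hk
    · rw [pow_one]; exact hItop
    · obtain ⟨Q, hQmem⟩ := Multiset.exists_mem_of_ne_zero
        (Multiset.card_pos.mp (by omega : 0 < Multiset.card (normalizedFactors I)))
      have hQp : Prime Q := prime_of_normalized_factor Q hQmem
      obtain ⟨J, hIJ⟩ := dvd_of_mem_normalizedFactors hQmem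
      have hQ0 : Q ≠ 0 := hQp.ne_zero
      have hJ0 : J ≠ 0 := by rintro rfl; rw [mul_zero] at hIJ; exact h0 hIJ
      have hcJ : k ≤ Multiset.card (normalizedFactors J) := by
        rw [hIJ, normalizedFactors_mul hQ0 hJ0, Multiset.card_add,
          normalizedFactors_irreducible hQp.irreducible, Multiset.card_singleton] at hcard
        omega
      rw [hIJ, pow_succ']
      exact Set.mul_mem_mul (show Q ∈ {J : Ideal R | J ≠ ⊤} from
        fun ht => hQp.not_unit (Ideal.isUnit_iff.mpr ht)) (ih hk J hJ0 hcJ)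

lemma card_normalizedFactors_finset_prod {ι : Type*} (s : Finset ι) (f : ι → Ideal R)
    (hf : ∀ j ∈ s, f j ≠ 0) :
    Multiset.card (normalizedFactors (∏ j ∈ s, f j)) =
      ∑ j ∈ s, Multiset.card (normalizedFactors (f j)) := by
  classical
  induction s using Finset.cons_induction with
  | empty => simp [← Ideal.one_eq_top, normalizedFactors_one]
  | cons a s ha ih =>
    rw [Finset.prod_cons, Finset.sum_cons,
      normalizedFactors_mul (hf a (Finset.mem_cons_self a s))
        (Finset.prod_ne_zero_iff.mpr fun j hj => hf j (Finset.mem_cons_of_mem hj)),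
      Multiset.card_add, ih fun j hj => hf j (Finset.mem_cons_of_mem hj)]

lemma exists_of_mem_set_pow {M : Type*} [CommMonoid M] {S : Set M} {x : M} {k : ℕ}
    (h : x ∈ S ^ k) : ∃ f : Fin k → M, (∀ j, f j ∈ S) ∧ ∏ j, f j = x := by
  obtain ⟨f, hf⟩ := Set.mem_pow.mp h
  exact ⟨fun j => f j, fun j => (f j).2, by rwa [← List.prod_ofFn]⟩

lemma prod_mem_set_pow {M : Type*} [CommMonoid M] {S : Set M} {k : ℕ} (f : Fin k → M)
    (hf : ∀ j, f j ∈ S) : (∏ j, f j) ∈ S ^ k :=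
  Set.mem_pow.mpr ⟨fun j => ⟨f j, hf j⟩, by rw [List.prod_ofFn]⟩

end Helpers

open UniqueFactorizationMonoid in
/-- For a Dedekind domain `R`, `R₀ = {x | x not a unit}`, `D₀ = {I | I a proper
ideal}` and a fixed `i ≥ 2`: `R₀^i = {x | (x) ∈ D₀^i}` iff `R` is a principal
ideal domain. -/
theorem pow_nonunits_eq_preimage_iff_pid {R : Type*} [CommRing R] [IsDedekindDomain R]
    (i : ℕ) (hi : 2 ≤ i) :
    (({x : R | ¬ IsUnit x} : Set R) ^ i
        = {x : R | Ideal.span {x} ∈ ({I : Ideal R | I ≠ ⊤} : Set (Ideal R)) ^ i}) ↔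
      IsPrincipalIdealRing R := by
  constructor
  · intro h
    refine IsPrincipalIdealRing.of_prime fun P hP => ?_
    by_contra hPnp
    have hPbot : P ≠ ⊥ := by rintro rfl; exact hPnp ⟨⟨0, (Ideal.span_singleton_eq_bot.mpr rfl).symm⟩⟩
    have hPtop : P ≠ ⊤ := hP.ne_top
    have hTne : {m : ℕ | ∃ a : R, a ≠ 0 ∧ a ∈ P ∧
        Multiset.card (normalizedFactors (Ideal.span {a} : Ideal R)) = m}.Nonempty := by
      obtain ⟨a, haP, ha0⟩ := P.ne_bot_iff.mp hPbot
      exact ⟨_, a, ha0, haP, rfl⟩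
    obtain ⟨a, ha0, haP, han⟩ := Nat.sInf_mem hTne
    set n := sInf {m : ℕ | ∃ a : R, a ≠ 0 ∧ a ∈ P ∧
        Multiset.card (normalizedFactors (Ideal.span {a} : Ideal R)) = m} with hn
    have hmin : ∀ b : R, b ≠ 0 → b ∈ P →
        n ≤ Multiset.card (normalizedFactors (Ideal.span {b} : Ideal R)) :=
      fun b h1 h2 => Nat.sInf_le ⟨b, h1, h2, rfl⟩
    have hspan0 : (Ideal.span {a} : Ideal R) ≠ 0 := span_singleton_ne_zero ha0
    -- every prime ideal dividing (a) is nonprincipal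
    have K1 : ∀ Q : Ideal R, Prime Q → Q ∣ Ideal.span {a} → ¬ Q.IsPrincipal := by
      intro Q hQ hdvd hprin
      obtain ⟨q, hq⟩ := hprin.principal
      rw [Ideal.submodule_span_eq] at hq
      have haQ : a ∈ Q := (Ideal.dvd_iff_le.mp hdvd) (Ideal.mem_span_singleton_self a)
      have hqa : q ∣ a := Ideal.mem_span_singleton.mp (by rwa [hq] at haQ)
      obtain ⟨b, hab⟩ := hqa
      have hq0 : q ≠ 0 := by
        rintro rfl
        exact hQ.ne_zero (by rw [hq, Ideal.zero_eq_bot]; simp)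
      have hb0 : b ≠ 0 := by rintro rfl; rw [mul_zero] at hab; exact ha0 hab
      rcases hP.mem_or_mem (show q * b ∈ P from hab ▸ haP) with hqP | hbP
      · have hQle : Q ≤ P := by rw [hq]; exact (Ideal.span_singleton_le_iff_mem _).mpr hqP
        have hQmax : Q.IsMaximal :=
          (Ideal.isPrime_of_prime hQ).isMaximal (by rw [← Ideal.zero_eq_bot]; exact hQ.ne_zero)
        have : Q = P := hQmax.eq_of_le hPtop hQle
        exact hPnp (this ▸ hprin)
      · have hminb := hmin b hb0 hbP
        have hq1 : Multiset.card (normalizedFactors (Ideal.span {q} : Ideal R)) = 1 :=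
          card_of_prime (hq ▸ hQ)
        have hadd : Multiset.card (normalizedFactors (Ideal.span {a} : Ideal R)) =
            Multiset.card (normalizedFactors (Ideal.span {q} : Ideal R)) +
            Multiset.card (normalizedFactors (Ideal.span {b} : Ideal R)) := by
          rw [hab, ← Ideal.span_singleton_mul_span_singleton,
            normalizedFactors_mul (span_singleton_ne_zero hq0) (span_singleton_ne_zero hb0),
            Multiset.card_add]
        omega
    have hspan_ne_top : (Ideal.span {a} : Ideal R) ≠ ⊤ := fun ht =>
      hPtop (top_le_iff.mp (ht ▸ (Ideal.span_singleton_le_iff_mem _).mpr haP))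
    have K2 : 2 ≤ n := by
      have h0 : n ≠ 0 := fun hz =>
        hspan_ne_top (eq_top_of_card_eq_zero hspan0 (by omega))
      have h1 : n ≠ 1 := fun h1 =>
        K1 _ (prime_of_card_eq_one hspan0 (by omega)) dvd_rfl ⟨⟨a, rfl⟩⟩
      omega
    rcases le_or_gt i n with hin | hni
    · -- case A : i ≤ n, use x = a
      have hmem : (Ideal.span {a} : Ideal R) ∈ ({I : Ideal R | I ≠ ⊤} : Set (Ideal R)) ^ i :=
        mem_pow_of_card_le i (by omega) _ hspan0 (by omega)
      have haL : a ∈ ({x : R | ¬ IsUnit x} : Set R) ^ i := by rw [h]; exact hmem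
      obtain ⟨f, hfS, hfprod⟩ := exists_of_mem_set_pow haL
      set j0 : Fin i := ⟨0, by omega⟩ with hj0
      set j1 : Fin i := ⟨1, by omega⟩ with hj1
      set c := f j0 with hc
      set d := ∏ j ∈ Finset.univ.erase j0, f j with hd
      have hcda : c * d = a := by
        rw [hc, hd, Finset.mul_prod_erase Finset.univ f (Finset.mem_univ j0), hfprod]
      have hcd0 : c * d ≠ 0 := by rw [hcda]; exact ha0
      have hc0 : c ≠ 0 := left_ne_zero_of_mul hcd0
      have hd0 : d ≠ 0 := right_ne_zero_of_mul hcd0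
      have hj1mem : j1 ∈ Finset.univ.erase j0 :=
        Finset.mem_erase.mpr ⟨by simp [hj0, hj1], Finset.mem_univ j1⟩
      have hdnu : ¬ IsUnit d := fun hu =>
        hfS j1 (isUnit_of_dvd_unit (Finset.dvd_prod_of_mem f hj1mem) hu)
      have hcnu : ¬ IsUnit c := hfS j0
      have hΩc := one_le_card_of_nonunit hc0 hcnu
      have hΩd := one_le_card_of_nonunit hd0 hdnu
      have hadd : Multiset.card (normalizedFactors (Ideal.span {a} : Ideal R)) =
          Multiset.card (normalizedFactors (Ideal.span {c} : Ideal R)) +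
          Multiset.card (normalizedFactors (Ideal.span {d} : Ideal R)) := by
        rw [← hcda, ← Ideal.span_singleton_mul_span_singleton,
          normalizedFactors_mul (span_singleton_ne_zero hc0) (span_singleton_ne_zero hd0),
          Multiset.card_add]
      rcases hP.mem_or_mem (show c * d ∈ P by rw [hcda]; exact haP) with hcP | hdP
      · have := hmin c hc0 hcP; omega
      · have := hmin d hd0 hdP; omega
    · -- case B : n < i, use x = a ^ k with k = ⌈i/n⌉
      set k := (i + n - 1) / n with hk
      have hub : k * n ≤ 2 * i - 2 :=
        le_trans (Nat.div_mul_le_self (i + n - 1) n) (by omega)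
      have hlb : i ≤ k * n := by
        have h3 : i + n - 1 < (k + 1) * n :=
          (Nat.div_lt_iff_lt_mul (by omega : 0 < n)).mp (Nat.lt_succ_self k)
        have h4 : (k + 1) * n = k * n + n := by ring
        rw [h4] at h3
        have h5 : i + n - 1 = i + (n - 1) := by omega
        rw [h5] at h3
        by_contra hcon
        push_neg at hcon
        have : k * n + n ≤ i + (n - 1) := by
          calc k * n + n ≤ (i - 1) + n := by omega
            _ ≤ i + (n - 1) := by omega
        omega
      have hx0 : a ^ k ≠ 0 := pow_ne_zero k ha0
      have hΩx : Multiset.card (normalizedFactors (Ideal.span {a ^ k} : Ideal R)) = k * n := by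
        rw [← Ideal.span_singleton_pow, normalizedFactors_pow, Multiset.card_nsmul, han]
      have hmem : (Ideal.span {a ^ k} : Ideal R) ∈ ({I : Ideal R | I ≠ ⊤} : Set (Ideal R)) ^ i :=
        mem_pow_of_card_le i (by omega) _ (span_singleton_ne_zero hx0) (by rw [hΩx]; exact hlb)
      have haL : a ^ k ∈ ({x : R | ¬ IsUnit x} : Set R) ^ i := by rw [h]; exact hmem
      obtain ⟨f, hfS, hfprod⟩ := exists_of_mem_set_pow haL
      have hf0 : ∀ j, f j ≠ 0 := by
        intro j
        exact Finset.prod_ne_zero_iff.mp (by rw [hfprod]; exact hx0) j (Finset.mem_univ j)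
      have hspan_sum : Multiset.card (normalizedFactors (Ideal.span {a ^ k} : Ideal R)) =
          ∑ j : Fin i, Multiset.card (normalizedFactors (Ideal.span {f j} : Ideal R)) := by
        rw [← hfprod,
          show (Ideal.span {∏ j, f j} : Ideal R) = ∏ j, Ideal.span {f j} from
            map_prod spanMonoidHom f Finset.univ]
        exact card_normalizedFactors_finset_prod Finset.univ _
          fun j _ => span_singleton_ne_zero (hf0 j)
      have htwo : ∀ j : Fin i,
          2 ≤ Multiset.card (normalizedFactors (Ideal.span {f j} : Ideal R)) := by
        intro j
        have h1j := one_le_card_of_nonunit (hf0 j) (hfS j)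
        rcases Nat.lt_or_ge (Multiset.card (normalizedFactors (Ideal.span {f j} : Ideal R))) 2
          with hlt | hge
        · exfalso
          have hcard1 : Multiset.card (normalizedFactors (Ideal.span {f j} : Ideal R)) = 1 := by
            omega
          have hQp : Prime (Ideal.span {f j} : Ideal R) :=
            prime_of_card_eq_one (span_singleton_ne_zero (hf0 j)) hcard1
          have hdvdpow : (Ideal.span {f j} : Ideal R) ∣ Ideal.span {a} ^ k := by
            rw [Ideal.span_singleton_pow]
            exact Ideal.dvd_iff_le.mpr (Ideal.span_singleton_le_span_singleton.mpr
              (hfprod ▸ Finset.dvd_prod_of_mem f (Finset.mem_univ j)))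
          exact K1 _ hQp (hQp.dvd_of_dvd_pow hdvdpow) ⟨⟨f j, rfl⟩⟩
        · exact hge
      have hge2i : 2 * i ≤
          ∑ j : Fin i, Multiset.card (normalizedFactors (Ideal.span {f j} : Ideal R)) := by
        calc 2 * i = ∑ _j : Fin i, 2 := by
              rw [Finset.sum_const, Finset.card_univ, Fintype.card_fin, smul_eq_mul, mul_comm]
          _ ≤ _ := Finset.sum_le_sum fun j _ => htwo j
      have hfin : 2 * i ≤ 2 * i - 2 := le_trans hge2i (le_trans (by omega) hub)
      omega
  · intro hpid
    ext x
    simp only [Set.mem_setOf_eq]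
    constructor
    · intro hx
      obtain ⟨f, hfS, hfprod⟩ := exists_of_mem_set_pow hx
      have hspan : (Ideal.span {x} : Ideal R) = ∏ j, Ideal.span {f j} := by
        rw [← hfprod]; exact map_prod spanMonoidHom f Finset.univ
      rw [hspan]
      exact prod_mem_set_pow _ fun j => fun ht => hfS j (Ideal.span_singleton_eq_top.mp ht)
    · intro hx
      obtain ⟨F, hFS, hFprod⟩ := exists_of_mem_set_pow hx
      choose y hy0 using fun j => (hpid.principal (F j)).principal
      have hy : ∀ j, F j = Ideal.span {y j} := fun j => (hy0 j).trans Ideal.submodule_span_eq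
      have hprod : (Ideal.span {∏ j, y j} : Ideal R) = Ideal.span {x} := by
        calc (Ideal.span {∏ j, y j} : Ideal R) = ∏ j, Ideal.span {y j} :=
              map_prod spanMonoidHom y Finset.univ
          _ = ∏ j, F j := Finset.prod_congr rfl fun j _ => (hy j).symm
          _ = Ideal.span {x} := hFprod
      obtain ⟨u, hu⟩ := Ideal.span_singleton_eq_span_singleton.mp hprod
      have hynu : ∀ j, ¬ IsUnit (y j) := fun j hyu =>
        hFS j (by rw [hy j]; exact Ideal.span_singleton_eq_top.mpr hyu)
      set j0 : Fin i := ⟨0, by omega⟩ with hj0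
      set g : Fin i → R := Function.update y j0 (y j0 * u) with hg
      have hgprod : ∏ j, g j = x := by
        rw [hg, Finset.prod_update_of_mem (Finset.mem_univ j0),
          Finset.sdiff_singleton_eq_erase, mul_right_comm,
          Finset.mul_prod_erase Finset.univ y (Finset.mem_univ j0), hu]
      have hgnu : ∀ j, ¬ IsUnit (g j) := by
        intro j
        rcases eq_or_ne j j0 with rfl | hne
        · rw [hg, Function.update_self]
          exact fun hyu => hynu j0 (isUnit_of_mul_isUnit_left hyu)
        · rw [hg, Function.update_of_ne hne]
          exact hynu j
      rw [← hgprod]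
      exact prod_mem_set_pow g hgnu
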